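/- Let s₁, s₂, e₀, ê, l₁, l₂, k₁, k₂ be real numbers with 0 < s₁ < s₂, e₀ ≥ 0, ê ≥ 0, l₁ ≥ 0, l₂ ≥ 0, k₁ ≥ 0, and k₂ ≥ 0. Assume e₀²/s₁² + ê² ≤ (1 + k₁) l₁/s₁² and (1 + k₂)⁻¹ l₂/s₂² ≤ e₀²/s₂² + ê². Then e₀² ≤ ( (1 + k₁) s₂² l₁ − (1 + k₂)⁻¹ s₁² l₂ ) / ( s₂² − s₁² ). -/

import Mathlib

/-- Algebraic core of the upper bound for the interior-variable error in the
two-parameter DPG loss analysis. -/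
theorem interior_error_upper_bound
    (s₁ s₂ e₀ eh l₁ l₂ k₁ k₂ : ℝ)
    (hs₁ : 0 < s₁) (hs₁₂ : s₁ < s₂)
    (he₀ : 0 ≤ e₀) (heh : 0 ≤ eh) (hl₁ : 0 ≤ l₁) (hl₂ : 0 ≤ l₂)
    (hk₁ : 0 ≤ k₁) (hk₂ : 0 ≤ k₂)
    (h1 : e₀ ^ 2 / s₁ ^ 2 + eh ^ 2 ≤ (1 + k₁) * l₁ / s₁ ^ 2)
    (h2 : (1 + k₂)⁻¹ * l₂ / s₂ ^ 2 ≤ e₀ ^ 2 / s₂ ^ 2 + eh ^ 2) :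
    e₀ ^ 2 ≤ ((1 + k₁) * s₂ ^ 2 * l₁ - (1 + k₂)⁻¹ * s₁ ^ 2 * l₂)
      / (s₂ ^ 2 - s₁ ^ 2) := by
  have hs2 : (0:ℝ) < s₂ := hs₁.trans hs₁₂
  have hden : (0:ℝ) < s₂ ^ 2 - s₁ ^ 2 := by nlinarith
  have h1' : e₀ ^ 2 + s₁ ^ 2 * eh ^ 2 ≤ (1 + k₁) * l₁ := by
    have := mul_le_mul_of_nonneg_left h1 (le_of_lt (by positivity : (0:ℝ) < s₁ ^ 2))
    field_simp at this
    nlinarith [sq_nonneg s₁]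
  have hss : (0:ℝ) < s₂ ^ 2 := by positivity
  have h2' : (1 + k₂)⁻¹ * l₂ ≤ e₀ ^ 2 + s₂ ^ 2 * eh ^ 2 := by
    calc (1 + k₂)⁻¹ * l₂ = ((1 + k₂)⁻¹ * l₂ / s₂ ^ 2) * s₂ ^ 2 := by
          field_simp
      _ ≤ (e₀ ^ 2 / s₂ ^ 2 + eh ^ 2) * s₂ ^ 2 :=
          mul_le_mul_of_nonneg_right h2 hss.le
      _ = e₀ ^ 2 + s₂ ^ 2 * eh ^ 2 := by field_simp
  rw [le_div_iff₀ hden]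
  nlinarith [mul_le_mul_of_nonneg_left h1' (le_of_lt (by positivity : (0:ℝ) < s₂ ^ 2)),
    mul_le_mul_of_nonneg_left h2' (le_of_lt (by positivity : (0:ℝ) < s₁ ^ 2))]
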